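/- Let γ ∈ (-n, ∞) and w(z) = |z|^γ on ℝⁿ. Then for all distinct x, y ∈ ℝⁿ, ∫_{B_{x,y}} |z|^γ dz is comparable (with constants depending only on n and γ) to (|x| + |y|)^γ |x-y|^n, where B_{x,y} is the ball of radius |x-y|/2 centered at (x+y)/2. -/

import Mathlib

open MeasureTheory Metric Set
open scoped ENNReal

noncomputable section

def ballXY {n : ℕ} (x y : EuclideanSpace ℝ (Fin n)) : Set (EuclideanSpace ℝ (Fin n)) :=
  ball (midpoint ℝ x y) (dist x y / 2)

section Aux

lemma rpow_ratio_le (γ : ℝ) {u s : ℝ} (hu : 0 < u) (hs : 0 < s) (h1 : s ≤ 12 * u)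
    (h2 : u ≤ 12 * s) : u ^ γ ≤ 12 ^ |γ| * s ^ γ := by
  rcases le_or_gt 0 γ with h | h
  · have h3 : u ^ γ ≤ (12 * s) ^ γ := Real.rpow_le_rpow hu.le h2 h
    rw [Real.mul_rpow (by norm_num) hs.le] at h3
    refine h3.trans (mul_le_mul_of_nonneg_right ?_ (Real.rpow_nonneg hs.le γ))
    exact Real.rpow_le_rpow_of_exponent_le (by norm_num) (le_abs_self γ)
  · have h3 : u ^ γ ≤ (s / 12) ^ γ := Real.rpow_le_rpow_of_nonpos (by positivity) (by linarith) h.le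
    rw [Real.div_rpow hs.le (by norm_num)] at h3
    rw [abs_of_neg h, Real.rpow_neg (by norm_num : (0:ℝ) ≤ 12)]
    rwa [div_eq_mul_inv, mul_comm] at h3

lemma pow_div_rpow (R : ℝ) (hR : 0 < R) (k : ℕ) (c : ℝ) :
    (R / 2 ^ k) ^ c = R ^ c * ((2:ℝ) ^ (-c)) ^ k := by
  rw [div_eq_mul_inv, Real.mul_rpow hR.le (by positivity),
    Real.inv_rpow (by positivity), ← Real.rpow_neg (by positivity),
    ← Real.rpow_natCast (2:ℝ) k, ← Real.rpow_mul (by norm_num),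
    ← Real.rpow_natCast ((2:ℝ) ^ (-c)) k, ← Real.rpow_mul (by norm_num), mul_comm (k:ℝ)]

lemma annulus_algebra (γ : ℝ) (R : ℝ) (hR : 0 < R) (n k : ℕ) :
    ((R / 2 ^ k) ^ γ + (R / 2 ^ (k + 1)) ^ γ) * (R / 2 ^ k) ^ n
      = (R ^ ((n : ℝ) + γ) * (1 + 2 ^ (-γ))) * ((2:ℝ) ^ (-((n:ℝ) + γ))) ^ k := by
  rw [← Real.rpow_natCast (R / 2 ^ k) n, pow_div_rpow R hR k γ, pow_div_rpow R hR (k+1) γ,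
    pow_div_rpow R hR k (n:ℝ), Real.rpow_add hR, neg_add, Real.rpow_add two_pos]
  ring

variable {n : ℕ}
local notation "E" => EuclideanSpace ℝ (Fin n)

lemma annuli_cover (R : ℝ) (hR : 0 < R) :
    ball (0 : E) R \ {0} ⊆ ⋃ k : ℕ, (ball (0 : E) (R / 2 ^ k) \ ball 0 (R / 2 ^ (k + 1))) := by
  rintro z ⟨hz, hz0⟩
  rw [mem_ball_zero_iff] at hz
  have hzpos : 0 < ‖z‖ := norm_pos_iff.2 (by simpa using hz0)
  have hex : ∃ k : ℕ, R / 2 ^ (k + 1) ≤ ‖z‖ := by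
    obtain ⟨j, hj⟩ := exists_pow_lt_of_lt_one (div_pos hzpos hR) (by norm_num : (1:ℝ)/2 < 1)
    refine ⟨j, ?_⟩
    have h4 : R * (1 / 2) ^ j < ‖z‖ := by
      rw [lt_div_iff₀ hR] at hj; linarith [hj]
    have h2 : R / 2 ^ (j+1) ≤ R / 2 ^ j := by
      apply div_le_div_of_nonneg_left hR.le (by positivity)
      exact pow_le_pow_right₀ (by norm_num) (Nat.le_succ j)
    refine h2.trans ?_
    rw [div_le_iff₀ (by positivity)]
    calc R = R * (1/2)^j * 2^j := by
            field_simp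
            rw [← mul_pow]; norm_num
      _ ≤ ‖z‖ * 2 ^ j := by
            apply mul_le_mul_of_nonneg_right h4.le (by positivity)
  classical
  let k := Nat.find hex
  have hk1 : R / 2 ^ (k + 1) ≤ ‖z‖ := Nat.find_spec hex
  have hk2 : ‖z‖ < R / 2 ^ k := by
    rcases Nat.eq_zero_or_pos k with h0 | hpos
    · simpa [h0] using hz
    · obtain ⟨m, hm⟩ := Nat.exists_eq_succ_of_ne_zero hpos.ne'
      have h3 := Nat.find_min hex (m := m) (by omega)
      push_neg at h3
      rw [hm]
      simpa using h3
  exact mem_iUnion.2 ⟨k, by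
    simp only [mem_diff, mem_ball_zero_iff, not_lt]
    exact ⟨hk2, hk1⟩⟩

lemma lint_bound (hn : 0 < n) (γ : ℝ) (hγ : -(n : ℝ) < γ) :
    ∃ C1 > 0, ∀ R > 0, (∫⁻ z in ball (0 : E) R, ENNReal.ofReal (‖z‖ ^ γ))
      ≤ ENNReal.ofReal (C1 * R ^ ((n : ℝ) + γ)) := by
  haveI : Nonempty (Fin n) := ⟨⟨0, hn⟩⟩
  haveI : Nontrivial (EuclideanSpace ℝ (Fin n)) := inferInstance
  set v := volume (ball (0 : E) 1) with hv
  have hv0 : 0 < v := measure_ball_pos volume 0 one_pos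
  have hvt : v ≠ ⊤ := measure_ball_lt_top.ne
  have hvr : 0 < v.toReal := ENNReal.toReal_pos hv0.ne' hvt
  set q : ℝ := (2:ℝ) ^ (-((n:ℝ) + γ)) with hqdef
  have hq0 : 0 < q := Real.rpow_pos_of_pos two_pos _
  have hq1 : q < 1 := Real.rpow_lt_one_of_one_lt_of_neg one_lt_two (by linarith)
  have h2g : (0:ℝ) < 2 ^ (-γ) := Real.rpow_pos_of_pos two_pos _
  refine ⟨v.toReal * ((1 + 2 ^ (-γ)) * (1 - q)⁻¹),
    mul_pos hvr (mul_pos (by positivity) (inv_pos.2 (by linarith))), ?_⟩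
  intro R hR
  set B : ℝ := R ^ ((n:ℝ) + γ) * (1 + 2 ^ (-γ)) with hB
  have hBpos : 0 < B := by
    have := Real.rpow_pos_of_pos hR ((n:ℝ) + γ); positivity
  have hann : ∀ k : ℕ,
      (∫⁻ z in (ball (0 : E) (R / 2 ^ k) \ ball 0 (R / 2 ^ (k + 1))), ENNReal.ofReal (‖z‖ ^ γ))
        ≤ ENNReal.ofReal (B * q ^ k) * v := by
    intro k
    have htk : (0:ℝ) < R / 2 ^ k := by positivity
    have htk1 : (0:ℝ) < R / 2 ^ (k+1) := by positivity
    set c : ℝ := (R / 2 ^ k) ^ γ + (R / 2 ^ (k+1)) ^ γ with hc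
    have hcnn : 0 ≤ c := by
      have := Real.rpow_nonneg htk.le γ; have := Real.rpow_nonneg htk1.le γ; positivity
    have hbb : ∀ z ∈ (ball (0 : E) (R / 2 ^ k) \ ball 0 (R / 2 ^ (k + 1))),
        ENNReal.ofReal (‖z‖ ^ γ) ≤ ENNReal.ofReal c := by
      intro z hz
      apply ENNReal.ofReal_le_ofReal
      obtain ⟨h1, h2⟩ := hz
      rw [mem_ball_zero_iff] at h1
      rw [mem_ball_zero_iff, not_lt] at h2
      rcases le_or_gt 0 γ with hsign | hsign
      · calc ‖z‖ ^ γ ≤ (R / 2 ^ k) ^ γ := Real.rpow_le_rpow (norm_nonneg z) h1.le hsign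
          _ ≤ c := le_add_of_nonneg_right (Real.rpow_nonneg htk1.le γ)
      · calc ‖z‖ ^ γ ≤ (R / 2 ^ (k+1)) ^ γ := Real.rpow_le_rpow_of_nonpos htk1 h2 hsign.le
          _ ≤ c := le_add_of_nonneg_left (Real.rpow_nonneg htk.le γ)
    calc (∫⁻ z in (ball (0 : E) (R / 2 ^ k) \ ball 0 (R / 2 ^ (k + 1))), ENNReal.ofReal (‖z‖ ^ γ))
        ≤ ∫⁻ _ in (ball (0 : E) (R / 2 ^ k) \ ball 0 (R / 2 ^ (k + 1))), ENNReal.ofReal c :=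
          setLIntegral_mono measurable_const hbb
      _ = ENNReal.ofReal c * volume (ball (0 : E) (R / 2 ^ k) \ ball 0 (R / 2 ^ (k + 1))) :=
          setLIntegral_const _ _
      _ ≤ ENNReal.ofReal c * volume (ball (0 : E) (R / 2 ^ k)) :=
          mul_le_mul_right (measure_mono diff_subset) _
      _ = ENNReal.ofReal c * (ENNReal.ofReal ((R / 2 ^ k) ^ n) * v) := by
          rw [Measure.addHaar_ball volume 0 htk.le, finrank_euclideanSpace_fin]
      _ = ENNReal.ofReal (B * q ^ k) * v := by
          rw [← mul_assoc, ← ENNReal.ofReal_mul hcnn, hc, annulus_algebra γ R hR n k]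
  have hmain : (∫⁻ z in ball (0 : E) R, ENNReal.ofReal (‖z‖ ^ γ))
      ≤ ENNReal.ofReal B * (1 - ENNReal.ofReal q)⁻¹ * v := by
    calc (∫⁻ z in ball (0 : E) R, ENNReal.ofReal (‖z‖ ^ γ))
        = ∫⁻ z in ball (0 : E) R \ {0}, ENNReal.ofReal (‖z‖ ^ γ) := by
          refine (setLIntegral_congr ?_).symm
          exact diff_ae_eq_self.2 (measure_mono_null inter_subset_right (measure_singleton 0))
      _ ≤ ∫⁻ z in ⋃ k : ℕ, (ball (0 : E) (R / 2 ^ k) \ ball 0 (R / 2 ^ (k + 1))),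
            ENNReal.ofReal (‖z‖ ^ γ) := lintegral_mono_set (annuli_cover R hR)
      _ ≤ ∑' k : ℕ, ∫⁻ z in (ball (0 : E) (R / 2 ^ k) \ ball 0 (R / 2 ^ (k + 1))),
            ENNReal.ofReal (‖z‖ ^ γ) := lintegral_iUnion_le _ _
      _ ≤ ∑' k : ℕ, ENNReal.ofReal (B * q ^ k) * v := ENNReal.tsum_le_tsum hann
      _ = (∑' k : ℕ, ENNReal.ofReal B * (ENNReal.ofReal q) ^ k) * v := by
          rw [← ENNReal.tsum_mul_right]
          congr 1; funext k
          rw [ENNReal.ofReal_mul hBpos.le, ENNReal.ofReal_pow hq0.le]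
      _ = ENNReal.ofReal B * (1 - ENNReal.ofReal q)⁻¹ * v := by
          rw [ENNReal.tsum_mul_left, ENNReal.tsum_geometric]
  refine hmain.trans (le_of_eq ?_)
  have e1 : (1 : ℝ≥0∞) - ENNReal.ofReal q = ENNReal.ofReal (1 - q) := by
    rw [ENNReal.ofReal_sub 1 hq0.le, ENNReal.ofReal_one]
  rw [e1, ← ENNReal.ofReal_inv_of_pos (by linarith : (0:ℝ) < 1 - q),
    ← ENNReal.ofReal_mul hBpos.le]
  have hC : v.toReal * ((1 + 2 ^ (-γ)) * (1 - q)⁻¹) * R ^ ((n:ℝ) + γ)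
      = (B * (1 - q)⁻¹) * v.toReal := by rw [hB]; ring
  rw [hC, ENNReal.ofReal_mul (mul_nonneg hBpos.le (inv_nonneg.2 (by linarith))),
    ENNReal.ofReal_toReal hvt]

lemma f_int (hn : 0 < n) (γ : ℝ) (hγ : -(n : ℝ) < γ) (m : E) (r : ℝ) :
    IntegrableOn (fun z : E => ‖z‖ ^ γ) (ball m r) := by
  obtain ⟨C1, hC1, hbound⟩ := lint_bound hn γ hγ
  set R : ℝ := ‖m‖ + max r 0 + 1 with hRdef
  have hR : 0 < R := by positivity
  have hsub : ball m r ⊆ ball (0 : E) R := by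
    intro z hz
    rw [mem_ball] at hz ⊢
    have h1 := dist_triangle z m 0
    simp only [dist_zero_right] at h1 ⊢
    have : r ≤ max r 0 := le_max_left _ _
    linarith
  refine IntegrableOn.mono_set ?_ hsub
  constructor
  · exact Measurable.aestronglyMeasurable (by fun_prop)
  · rw [hasFiniteIntegral_iff_norm]
    have hno : ∀ z : E, ENNReal.ofReal ‖‖z‖ ^ γ‖ = ENNReal.ofReal (‖z‖ ^ γ) := fun z => by
      rw [Real.norm_of_nonneg (Real.rpow_nonneg (norm_nonneg z) γ)]
    simp_rw [hno]
    exact lt_of_le_of_lt (hbound R hR) ENNReal.ofReal_lt_top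

lemma f_nonneg_ae (γ : ℝ) (μ : Measure E) : 0 ≤ᶠ[ae μ] fun z : E => ‖z‖ ^ γ :=
  Filter.Eventually.of_forall fun z => Real.rpow_nonneg (norm_nonneg z) γ

lemma hint_eq (γ : ℝ) (s : Set E) :
    ∫ z in s, ‖z‖ ^ γ = (∫⁻ z in s, ENNReal.ofReal (‖z‖ ^ γ)).toReal :=
  integral_eq_lintegral_of_nonneg_ae (f_nonneg_ae γ _)
    (Measurable.aestronglyMeasurable (by fun_prop))

lemma vol_ball_toReal (hn : 0 < n) (p : E) {ρ : ℝ} (hρ : 0 ≤ ρ) :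
    (volume (ball p ρ)).toReal = ρ ^ n * (volume (ball (0 : E) 1)).toReal := by
  haveI : Nonempty (Fin n) := ⟨⟨0, hn⟩⟩
  haveI : Nontrivial (EuclideanSpace ℝ (Fin n)) := inferInstance
  rw [Measure.addHaar_ball volume p hρ, finrank_euclideanSpace_fin, ENNReal.toReal_mul,
    ENNReal.toReal_ofReal (by positivity)]

lemma exists_point (hn : 0 < n) (m : E) {r : ℝ} (hr : 0 < r) :
    ∃ p : E, dist p m = r / 2 ∧ ‖p‖ = ‖m‖ + r / 2 := by
  by_cases hm : m = 0
  · refine ⟨EuclideanSpace.single ⟨0, hn⟩ (r / 2), ?_, ?_⟩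
    · rw [hm, dist_zero_right, EuclideanSpace.norm_single, Real.norm_of_nonneg (by linarith)]
    · rw [hm, EuclideanSpace.norm_single, Real.norm_of_nonneg (by linarith), norm_zero, zero_add]
  · have hm0 : 0 < ‖m‖ := norm_pos_iff.2 hm
    refine ⟨m + (r / (2 * ‖m‖)) • m, ?_, ?_⟩
    · rw [dist_eq_norm, add_sub_cancel_left, norm_smul, Real.norm_of_nonneg (by positivity)]
      field_simp
    · have : m + (r / (2 * ‖m‖)) • m = (1 + r / (2 * ‖m‖)) • m := by
        rw [add_smul, one_smul]
      rw [this, norm_smul, Real.norm_of_nonneg (by positivity)]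
      field_simp

lemma key (hn : 0 < n) (γ : ℝ) (hγ : -(n : ℝ) < γ) :
    ∃ c > 0, ∃ C > 0, ∀ (m : E) (r : ℝ), 0 < r →
      c * (‖m‖ + r) ^ γ * r ^ n ≤ (∫ z in ball m r, ‖z‖ ^ γ) ∧
      (∫ z in ball m r, ‖z‖ ^ γ) ≤ C * (‖m‖ + r) ^ γ * r ^ n := by
  obtain ⟨C1, hC1, hbound⟩ := lint_bound hn γ hγ
  set vr := (volume (ball (0 : E) 1)).toReal with hvrdef
  have hvr : 0 < vr :=
    ENNReal.toReal_pos (measure_ball_pos volume 0 one_pos).ne' measure_ball_lt_top.ne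
  set K := (12 : ℝ) ^ |γ| with hKdef
  have hK : 0 < K := Real.rpow_pos_of_pos (by norm_num) _
  refine ⟨vr * K⁻¹ / 4 ^ n, by positivity, vr * K + C1 * 3 ^ n * K, by positivity, ?_⟩
  intro m r hr
  set s := ‖m‖ + r with hsdef
  have hs : 0 < s := by positivity
  have hsγ : 0 ≤ s ^ γ := Real.rpow_nonneg hs.le γ
  constructor
  · -- lower bound
    obtain ⟨p, hp1, hp2⟩ := exists_point hn m hr
    have hsub : ball p (r / 4) ⊆ ball m r := by
      intro z hz; rw [mem_ball] at hz ⊢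
      have := dist_triangle z p m
      rw [hp1] at this; linarith
    have hlow : ∀ z ∈ ball p (r / 4), K⁻¹ * s ^ γ ≤ ‖z‖ ^ γ := by
      intro z hz
      rw [mem_ball] at hz
      have e1 : ‖p‖ - ‖z‖ ≤ dist z p := by
        rw [dist_comm, dist_eq_norm]; exact norm_sub_norm_le p z
      have e2 : ‖z‖ - ‖p‖ ≤ dist z p := by
        rw [dist_eq_norm]; exact norm_sub_norm_le z p
      have hz1 : ‖m‖ + r / 4 ≤ ‖z‖ := by rw [hp2] at e1; linarith
      have hz2 : ‖z‖ ≤ s := by rw [hp2] at e2; rw [hsdef]; linarith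
      have hzpos : 0 < ‖z‖ := by
        have := norm_nonneg m; linarith
      have h5 := rpow_ratio_le γ hs hzpos
        (by linarith)
        (by have := norm_nonneg m; rw [hsdef]; linarith)
      rw [inv_mul_le_iff₀ hK]
      exact h5
    have hvol : (volume (ball p (r / 4))).toReal = (r / 4) ^ n * vr :=
      vol_ball_toReal hn p (by positivity)
    have step1 : (∫ _ in ball p (r / 4), (K⁻¹ * s ^ γ)) ≤ ∫ z in ball p (r / 4), ‖z‖ ^ γ :=
      setIntegral_mono_on (integrableOn_const measure_ball_lt_top.ne)
        (f_int hn γ hγ p (r / 4)) measurableSet_ball hlow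
    have step2 : (∫ z in ball p (r / 4), ‖z‖ ^ γ) ≤ ∫ z in ball m r, ‖z‖ ^ γ :=
      setIntegral_mono_set (f_int hn γ hγ m r) (f_nonneg_ae γ _)
        (HasSubset.Subset.eventuallyLE hsub)
    have e3 : (∫ _ in ball p (r / 4), (K⁻¹ * s ^ γ)) = (r / 4) ^ n * vr * (K⁻¹ * s ^ γ) := by
      rw [setIntegral_const, Measure.real, hvol, smul_eq_mul]
    have e4 : vr * K⁻¹ / 4 ^ n * s ^ γ * r ^ n = (r / 4) ^ n * vr * (K⁻¹ * s ^ γ) := by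
      rw [div_pow]; ring
    rw [e4, ← e3]
    exact step1.trans step2
  · -- upper bound
    by_cases hcase : 2 * r ≤ ‖m‖
    · have hup : ∀ z ∈ ball m r, ‖z‖ ^ γ ≤ K * s ^ γ := by
        intro z hz
        rw [mem_ball] at hz
        have e1 : ‖m‖ - ‖z‖ ≤ dist z m := by
          rw [dist_comm, dist_eq_norm]; exact norm_sub_norm_le m z
        have e2 : ‖z‖ - ‖m‖ ≤ dist z m := by
          rw [dist_eq_norm]; exact norm_sub_norm_le z m
        have hzpos : 0 < ‖z‖ := by linarith
        exact rpow_ratio_le γ hzpos hs (by rw [hsdef]; linarith) (by rw [hsdef]; linarith)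
      have step1 : (∫ z in ball m r, ‖z‖ ^ γ) ≤ ∫ _ in ball m r, (K * s ^ γ) :=
        setIntegral_mono_on (f_int hn γ hγ m r)
          (integrableOn_const measure_ball_lt_top.ne) measurableSet_ball hup
      have e3 : (∫ _ in ball m r, (K * s ^ γ)) = r ^ n * vr * (K * s ^ γ) := by
        rw [setIntegral_const, Measure.real, vol_ball_toReal hn m hr.le, smul_eq_mul]
      refine (step1.trans (le_of_eq e3)).trans ?_
      nlinarith [mul_nonneg (mul_nonneg (mul_nonneg hC1.le
        (pow_nonneg (by norm_num : (0:ℝ) ≤ 3) n)) hK.le)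
        (mul_nonneg hsγ (pow_nonneg hr.le n)), pow_pos hr n]
    · push_neg at hcase
      have hsub : ball m r ⊆ ball (0 : E) (3 * r) := by
        intro z hz
        rw [mem_ball] at hz
        rw [mem_ball_zero_iff]
        have h1 := dist_triangle z m 0
        simp only [dist_zero_right] at h1
        linarith
      have step1 : (∫ z in ball m r, ‖z‖ ^ γ) ≤ ∫ z in ball (0 : E) (3 * r), ‖z‖ ^ γ :=
        setIntegral_mono_set (f_int hn γ hγ 0 (3 * r)) (f_nonneg_ae γ _)
          (HasSubset.Subset.eventuallyLE hsub)
      have step2 : (∫ z in ball (0 : E) (3 * r), ‖z‖ ^ γ) ≤ C1 * (3 * r) ^ ((n : ℝ) + γ) := by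
        rw [hint_eq γ]
        have := ENNReal.toReal_mono ENNReal.ofReal_ne_top (hbound (3 * r) (by positivity))
        rwa [ENNReal.toReal_ofReal (by positivity)] at this
      have e4 : (3 * r) ^ ((n : ℝ) + γ) = 3 ^ n * r ^ n * (3 * r) ^ γ := by
        rw [Real.rpow_add (by positivity), Real.rpow_natCast, mul_pow]
      have e5 : (3 * r) ^ γ ≤ K * s ^ γ :=
        rpow_ratio_le γ (by positivity) hs (by rw [hsdef]; linarith)
          (by have := norm_nonneg m; rw [hsdef]; linarith)
      refine (step1.trans step2).trans ?_
      rw [e4]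
      calc C1 * (3 ^ n * r ^ n * (3 * r) ^ γ) = (C1 * 3 ^ n * r ^ n) * (3 * r) ^ γ := by ring
        _ ≤ (C1 * 3 ^ n * r ^ n) * (K * s ^ γ) :=
            mul_le_mul_of_nonneg_left e5 (by positivity)
        _ = C1 * 3 ^ n * K * s ^ γ * r ^ n := by ring
        _ ≤ (vr * K + C1 * 3 ^ n * K) * s ^ γ * r ^ n := by
            nlinarith [mul_nonneg (mul_nonneg hvr.le hK.le)
              (mul_nonneg hsγ (pow_nonneg hr.le n))]

end Aux

/-- for `γ > -n` and the weight `w(z) = |z|^γ`, for all distinct `x, y`,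
`∫_{B_{x,y}} |z|^γ dz ≍ (|x|+|y|)^γ |x-y|^n` with constants depending only on `n, γ`. -/
theorem statement6 {n : ℕ} (γ : ℝ) (hγ : -(n : ℝ) < γ) :
    ∃ c > 0, ∃ C > 0, ∀ x y : EuclideanSpace ℝ (Fin n), x ≠ y →
      c * (‖x‖ + ‖y‖) ^ γ * dist x y ^ (n : ℝ) ≤ (∫ z in ballXY x y, ‖z‖ ^ γ) ∧
      (∫ z in ballXY x y, ‖z‖ ^ γ) ≤ C * (‖x‖ + ‖y‖) ^ γ * dist x y ^ (n : ℝ) := by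
  rcases Nat.eq_zero_or_pos n with hn0 | hn
  · subst hn0
    exact ⟨1, one_pos, 1, one_pos, fun x y hxy => absurd (Subsingleton.elim x y) hxy⟩
  · obtain ⟨c0, hc0, C0, hC0, hkey⟩ := key hn γ hγ
    have hK : 0 < (12 : ℝ) ^ |γ| := Real.rpow_pos_of_pos (by norm_num) _
    set K := (12 : ℝ) ^ |γ| with hKdef
    refine ⟨c0 * K⁻¹ / 2 ^ n, by positivity, C0 * K / 2 ^ n, by positivity, ?_⟩
    intro x y hxy
    set m := midpoint ℝ x y with hm
    have hd0 : 0 < dist x y := dist_pos.2 hxy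
    set d := dist x y with hd
    have hr : 0 < d / 2 := by positivity
    have hball : ballXY x y = ball m (d / 2) := rfl
    obtain ⟨hlow, hup⟩ := hkey m (d / 2) hr
    have hmeq : ‖m‖ ≤ (‖x‖ + ‖y‖) / 2 := by
      have h1 : m = (2⁻¹ : ℝ) • (x + y) := by rw [hm, midpoint_eq_smul_add, invOf_eq_inv]
      rw [h1, norm_smul]
      have h2 : ‖(2⁻¹ : ℝ)‖ = 2⁻¹ := by simp
      rw [h2]
      have := norm_add_le x y
      linarith
    have hdS : d ≤ ‖x‖ + ‖y‖ := by rw [hd, dist_eq_norm]; exact norm_sub_le x y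
    have hxm : ‖x‖ ≤ ‖m‖ + d / 2 := by
      have h1 : dist x m = d / 2 := by
        rw [hm, dist_left_midpoint (𝕜 := ℝ)]; simp [← hd]; ring
      have h2 := dist_triangle x m 0
      simp only [dist_zero_right] at h2
      linarith [h2, h1.le]
    have hym : ‖y‖ ≤ ‖m‖ + d / 2 := by
      have h1 : dist y m = d / 2 := by
        rw [hm, dist_right_midpoint (𝕜 := ℝ)]; simp [← hd]; ring
      have h2 := dist_triangle y m 0
      simp only [dist_zero_right] at h2
      linarith [h2, h1.le]
    set s := ‖m‖ + d / 2 with hsdef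
    set S := ‖x‖ + ‖y‖ with hSdef
    have hs : 0 < s := by have := norm_nonneg m; rw [hsdef]; linarith
    have hS : 0 < S := lt_of_lt_of_le hd0 hdS
    have hsS : s ≤ S := by rw [hsdef]; linarith [hmeq, hdS]
    have hSs : S ≤ 2 * s := by rw [hSdef]; linarith [hxm, hym]
    have hc1 : S ^ γ ≤ K * s ^ γ := rpow_ratio_le γ hS hs (by linarith) (by linarith)
    have hc2 : s ^ γ ≤ K * S ^ γ := rpow_ratio_le γ hs hS (by linarith) (by linarith)
    have hdn : d ^ (n : ℝ) = d ^ n := Real.rpow_natCast d n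
    have hrn : (d / 2) ^ n = d ^ n / 2 ^ n := div_pow d 2 n
    constructor
    · have h6 : K⁻¹ * S ^ γ ≤ s ^ γ := by rw [inv_mul_le_iff₀ hK]; exact hc1
      rw [hball, hdn]
      calc c0 * K⁻¹ / 2 ^ n * S ^ γ * d ^ n = (c0 * (d ^ n / 2 ^ n)) * (K⁻¹ * S ^ γ) := by ring
        _ ≤ (c0 * (d ^ n / 2 ^ n)) * s ^ γ := by
            apply mul_le_mul_of_nonneg_left h6 (by positivity)
        _ = c0 * s ^ γ * (d / 2) ^ n := by rw [hrn]; ring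
        _ ≤ _ := hlow
    · have hSγ : 0 ≤ S ^ γ := Real.rpow_nonneg hS.le γ
      rw [hball, hdn]
      calc (∫ z in ball m (d / 2), ‖z‖ ^ γ) ≤ C0 * s ^ γ * (d / 2) ^ n := hup
        _ = (C0 * (d ^ n / 2 ^ n)) * s ^ γ := by rw [hrn]; ring
        _ ≤ (C0 * (d ^ n / 2 ^ n)) * (K * S ^ γ) := by
            apply mul_le_mul_of_nonneg_left hc2 (by positivity)
        _ = C0 * K / 2 ^ n * S ^ γ * d ^ n := by ring
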